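/- Let $L_k$ denote the $k$-th Legendre polynomial on $[-1,1]$ and for $k \geq 0$ define $\hat h_k = L_k + \alpha_k L_{k+1} + \beta_k L_{k+2} + \gamma_k L_{k+3} + \eta_k L_{k+4}$ with $\alpha_k = 0$, $\beta_k = -\frac{4k+10}{2k+7}$, $\gamma_k = 0$, and $\eta_k = \frac{2k+3}{2k+7}$. Then $\hat h_k(1) = \hat h_k(-1) = 0$ and $\hat h_k'(1) = \hat h_k'(-1) = 0$. -/

import Mathlib

/-- the compact combination
`ĥ_k = L_k + α_k L_{k+1} + β_k L_{k+2} + γ_k L_{k+3} + η_k L_{k+4}`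
of Legendre polynomials, with `α_k = γ_k = 0`, `β_k = -(4k+10)/(2k+7)`,
`η_k = (2k+3)/(2k+7)`, vanishes together with its derivative at `±1`.
The Legendre polynomials are encoded through their endpoint values
`L_k(1) = 1`, `L_k(-1) = (-1)^k`, `L_k'(1) = k(k+1)/2`,
`L_k'(-1) = (-1)^{k+1} k(k+1)/2`. -/
theorem stmt_3 (L : ℕ → ℝ → ℝ)
    (hdiff : ∀ k, Differentiable ℝ (L k))
    (hval1 : ∀ k, L k 1 = 1)
    (hvalm1 : ∀ k, L k (-1) = (-1 : ℝ)^k)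
    (hder1 : ∀ k, deriv (L k) 1 = (k : ℝ) * (k + 1) / 2)
    (hderm1 : ∀ k, deriv (L k) (-1) = (-1 : ℝ)^(k+1) * ((k : ℝ) * (k + 1) / 2))
    (k : ℕ)
    (hk : ℝ → ℝ)
    (hhk : ∀ x : ℝ, hk x =
      L k x + (0 : ℝ) * L (k+1) x
        + (-((4 * (k : ℝ) + 10) / (2 * (k : ℝ) + 7))) * L (k+2) x
        + (0 : ℝ) * L (k+3) x
        + ((2 * (k : ℝ) + 3) / (2 * (k : ℝ) + 7)) * L (k+4) x) :
    hk 1 = 0 ∧ hk (-1) = 0 ∧ deriv hk 1 = 0 ∧ deriv hk (-1) = 0 := by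
  have hden : (2 * (k : ℝ) + 7) ≠ 0 := by positivity
  have hfun : hk = fun x => L k x + (0 : ℝ) * L (k+1) x
        + (-((4 * (k : ℝ) + 10) / (2 * (k : ℝ) + 7))) * L (k+2) x
        + (0 : ℝ) * L (k+3) x
        + ((2 * (k : ℝ) + 3) / (2 * (k : ℝ) + 7)) * L (k+4) x := funext hhk
  have hderiv : ∀ y : ℝ, deriv hk y = deriv (L k) y
        + (-((4 * (k : ℝ) + 10) / (2 * (k : ℝ) + 7))) * deriv (L (k+2)) y
        + ((2 * (k : ℝ) + 3) / (2 * (k : ℝ) + 7)) * deriv (L (k+4)) y := by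
    intro y
    have h0 := ((hdiff k) y).hasDerivAt
    have h1 := ((hdiff (k+1)) y).hasDerivAt
    have h2 := ((hdiff (k+2)) y).hasDerivAt
    have h3 := ((hdiff (k+3)) y).hasDerivAt
    have h4 := ((hdiff (k+4)) y).hasDerivAt
    have H := (((h0.add (h1.const_mul (0:ℝ))).add
        (h2.const_mul (-((4 * (k : ℝ) + 10) / (2 * (k : ℝ) + 7))))).add
        (h3.const_mul (0:ℝ))).add
        (h4.const_mul ((2 * (k : ℝ) + 3) / (2 * (k : ℝ) + 7)))
    rw [hfun]
    erw [H.deriv]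
    ring
  refine ⟨?_, ?_, ?_, ?_⟩
  · rw [hhk, hval1, hval1, hval1, hval1, hval1]; field_simp; ring
  · rw [hhk, hvalm1, hvalm1, hvalm1, hvalm1, hvalm1]
    have h2 : ((-1:ℝ))^(k+2) = (-1:ℝ)^k := by ring
    have h4 : ((-1:ℝ))^(k+4) = (-1:ℝ)^k := by ring
    rw [h2, h4]; field_simp; ring
  · rw [hderiv, hder1, hder1, hder1]; push_cast; field_simp; ring
  · rw [hderiv, hderm1, hderm1, hderm1]
    have h3 : ((-1:ℝ))^(k+2+1) = (-1:ℝ)^(k+1) := by ring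
    have h5 : ((-1:ℝ))^(k+4+1) = (-1:ℝ)^(k+1) := by ring
    rw [h3, h5]; push_cast; field_simp; ring
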